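/- Let ₂P₁[A,B;C;λ] := Σ_{y∈F_q} B(y)·(B⁻¹C)(1−y)·A⁻¹(1−λy). For any multiplicative characters A,B,C of F_q and any λ ∈ F_q: ₂P₁[A,B;C;λ] = B(−1)·₂P₁[A,B; A·B·C⁻¹; 1−λ]. -/

import Mathlib

open scoped Classical

/-- The Jacobi sum `J(A,B) = Σ_{x∈F_q} A(x)·B(1−x)`. -/
noncomputable def jacobiS {F : Type*} [Field F] [Fintype F] (A B : MulChar F ℂ) : ℂ :=
  ∑ x : F, A x * B (1 - x)

/-- The finite field period function
`₂P₁[A,B;C;λ] = Σ_{y∈F_q} B(y)·(B⁻¹C)(1−y)·A⁻¹(1−λy)`. -/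
noncomputable def P2 {F : Type*} [Field F] [Fintype F]
    (A B C : MulChar F ℂ) (lam : F) : ℂ :=
  ∑ y : F, B y * (B⁻¹ * C) (1 - y) * A⁻¹ (1 - lam * y)

private lemma chi_inv_val {F : Type*} [Field F] (χ : MulChar F ℂ) (u : F) :
    χ u⁻¹ = (χ u)⁻¹ := by
  rw [← MulChar.inv_apply', MulChar.inv_apply_eq_inv']

private lemma chi_ne_zero {F : Type*} [Field F] (χ : MulChar F ℂ) {u : F}
    (hu : u ≠ 0) : χ u ≠ 0 := by
  intro h
  have : χ u * χ u⁻¹ = 1 := by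
    rw [← map_mul, mul_inv_cancel₀ hu, map_one]
  rw [h, zero_mul] at this
  exact zero_ne_one this

private lemma chi_neg_one_inv {F : Type*} [Field F] (χ : MulChar F ℂ) :
    (χ (-1 : F))⁻¹ = χ (-1 : F) := by
  refine inv_eq_of_mul_eq_one_left ?_
  rw [← map_mul]
  norm_num


/-- Finite field Kummer relation:
`₂P₁[A,B;C;λ] = B(−1)·₂P₁[A,B;ABC⁻¹;1−λ]`. -/
theorem P2_kummer
    {F : Type*} [Field F] [Fintype F] [DecidableEq F]
    (A B C : MulChar F ℂ) (lam : F) :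
    P2 A B C lam = B (-1) * P2 A B (A * B * C⁻¹) (1 - lam) := by
  unfold P2
  rw [Finset.mul_sum]
  have h1 : ∀ (D E : MulChar F ℂ) (μ : F) (c : ℂ),
      ∑ y : F, c * (B y * D (1 - y) * E (1 - μ * y))
        = ∑ y ∈ Finset.univ.erase (1 : F), c * (B y * D (1 - y) * E (1 - μ * y)) := by
    intro D E μ c
    rw [Finset.sum_erase]
    simp [MulChar.map_zero]
  have l := h1 (B⁻¹ * C) A⁻¹ lam 1
  simp only [one_mul] at l
  rw [l, h1 (B⁻¹ * (A * B * C⁻¹)) A⁻¹ (1 - lam) (B (-1))]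
  have hmem : ∀ z ∈ (Finset.univ : Finset F).erase 1,
      z / (z - 1) ∈ (Finset.univ : Finset F).erase 1 := by
    intro z hz
    simp only [Finset.mem_erase, Finset.mem_univ, and_true] at hz ⊢
    intro h
    rw [div_eq_one_iff_eq (sub_ne_zero.mpr hz)] at h
    have : (0 : F) = -1 := by linear_combination h
    simpa using this.symm
  have hinv : ∀ z ∈ (Finset.univ : Finset F).erase 1,
      (z / (z - 1)) / (z / (z - 1) - 1) = z := by
    intro z hz
    simp only [Finset.mem_erase, Finset.mem_univ, and_true] at hz
    have h0 : z - 1 ≠ 0 := sub_ne_zero.mpr hz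
    have e : z / (z - 1) - 1 = 1 / (z - 1) := by field_simp; ring
    rw [e]
    rw [div_div_eq_mul_div, div_mul_eq_mul_div, div_one, mul_div_assoc,
      div_self h0, mul_one]
  refine Finset.sum_nbij' (fun z => z / (z - 1)) (fun z => z / (z - 1))
    hmem hmem hinv hinv ?_
  intro y hy
  simp only [Finset.mem_erase, Finset.mem_univ, and_true] at hy
  have hu0 : y - 1 ≠ 0 := sub_ne_zero.mpr hy
  set u : F := y - 1 with hu
  have e1 : y / u = y * u⁻¹ := div_eq_mul_inv _ _
  have e2 : (1 : F) - y * u⁻¹ = (-1) * u⁻¹ := by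
    field_simp
    rw [hu]; ring
  have e3 : (1 : F) - (1 - lam) * (y * u⁻¹) = (-1) * ((1 - lam * y) * u⁻¹) := by
    field_simp
    ring
  have e4 : (1 : F) - y = (-1) * u := by rw [hu]; ring
  simp only [e1, e3, e2, e4]
  simp only [map_mul, MulChar.mul_apply, MulChar.inv_apply_eq_inv', chi_inv_val,
    chi_neg_one_inv, mul_inv]
  have hAu := chi_ne_zero A hu0
  have hBu := chi_ne_zero B hu0
  have hCu := chi_ne_zero C hu0
  have hB1 := chi_ne_zero B (show (-1 : F) ≠ 0 by norm_num)
  have hC1 := chi_ne_zero C (show (-1 : F) ≠ 0 by norm_num)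
  have hA1 := chi_ne_zero A (show (-1 : F) ≠ 0 by norm_num)
  have hb : B (-1 : F) * B (-1 : F) = 1 := by rw [← map_mul]; norm_num
  have hc : C (-1 : F) * C (-1 : F) = 1 := by rw [← map_mul]; norm_num
  have ha : A (-1 : F) * A (-1 : F) = 1 := by rw [← map_mul]; norm_num
  have hau : A u * (A u)⁻¹ = 1 := mul_inv_cancel₀ hAu
  have hbu : B u * (B u)⁻¹ = 1 := mul_inv_cancel₀ hBu
  field_simp
  linear_combination
    (-(B y * B (-1 : F) * C (-1 : F) * C u * (B u)⁻¹ * (A (1 - lam * y))⁻¹)) * hb +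
    (-(B y * B (-1 : F) ^ 3 * C (-1 : F) * C u * (B u)⁻¹ * (A (1 - lam * y))⁻¹)) * ha +
    (-(B y * B (-1 : F) ^ 3 * C (-1 : F) * C u * (B u)⁻¹ * (A (1 - lam * y))⁻¹ * A (-1 : F) ^ 2)) * hbu +
    (-(B y * B (-1 : F) ^ 3 * C (-1 : F) * C u * (B u)⁻¹ * (A (1 - lam * y))⁻¹ * A (-1 : F) ^ 2 * B u * (B u)⁻¹)) * hau +
    (B y * (A (1 - lam * y))⁻¹ * (-(A (-1 : F)) ^ 2 + (B (-1 : F) * C (-1 : F) * C u * (B u)⁻¹))) * hb +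
    (B y * (A (1 - lam * y))⁻¹ * (-1 + (B (-1 : F) * C (-1 : F) * C u * (B u)⁻¹) * B (-1 : F) ^ 2)) * ha +
    (B y * (A (1 - lam * y))⁻¹ * (B (-1 : F) * C (-1 : F) * C u * (B u)⁻¹) * B (-1 : F) ^ 2 * A (-1 : F) ^ 2) * hbu +
    (B y * (A (1 - lam * y))⁻¹ * (B (-1 : F) * C (-1 : F) * C u * (B u)⁻¹) * B (-1 : F) ^ 2 * A (-1 : F) ^ 2 * (B u * (B u)⁻¹)) * hau
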